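/- (Theorem 1(i).) Let E be a finite-dimensional real inner product space and J : E → ℝ be differentiable with L-Lipschitz gradient (L > 0) and bounded from below. Let η > 0 with 2 − Lη > 0. Let (θ^m)_{m≥1} be a bounded sequence generated by θ^{m+1} = θ^m − (Δ^m)⁻¹(∇J(θ^m) − e^m), where each Δ^m is an invertible symmetric linear map with (1/η)‖v‖² ≤ ⟨Δ^m v, v⟩ and ‖Δ^m v‖ ≤ L‖v‖ for all v, and ‖e^m‖ ≤ ε̄ for all m with ε̄ ≥ 0. Then there exists a limit point θ̄ of the sequence (θ^m) (i.e., the limit of some convergent subsequence) such that ‖∇J(θ̄)‖ ≤ c₁ ε̄ with c₁ = (2 + Lη)/(2 − Lη). -/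

import Mathlib

open Filter
open scoped RealInnerProductSpace

lemma descent_lemma
    {E : Type*} [NormedAddCommGroup E] [InnerProductSpace ℝ E] [CompleteSpace E]
    (J : E → ℝ) (L : ℝ) (hL : 0 ≤ L)
    (hJd : Differentiable ℝ J)
    (hlip : ∀ x y : E, ‖gradient J x - gradient J y‖ ≤ L * ‖x - y‖)
    (x y : E) :
    J y ≤ J x + ⟪gradient J x, y - x⟫ + L / 2 * ‖y - x‖ ^ 2 := by
  set g := gradient J with hg
  have hgc : Continuous g := by
    have : LipschitzWith (Real.toNNReal L) g := by
      apply LipschitzWith.of_dist_le_mul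
      intro a b
      simp only [dist_eq_norm, Real.coe_toNNReal _ hL]
      exact hlip a b
    exact this.continuous
  -- path
  have hpath : ∀ t : ℝ, HasDerivAt (fun t : ℝ => x + t • (y - x)) (y - x) t := by
    intro t
    simpa using ((hasDerivAt_id t).smul_const (y - x)).const_add x
  have hderiv : ∀ t : ℝ, HasDerivAt (fun t : ℝ => J (x + t • (y - x)))
      (⟪g (x + t • (y - x)), y - x⟫) t := by
    intro t
    have h1 := ((hJd (x + t • (y - x))).hasGradientAt.hasFDerivAt).comp_hasDerivAt t (hpath t)
    simp only [InnerProductSpace.toDual_apply_apply] at h1; exact h1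
  have hcont : Continuous fun t : ℝ => ⟪g (x + t • (y - x)), y - x⟫ := by
    apply Continuous.inner
    · exact hgc.comp (by continuity)
    · exact continuous_const
  have hFTC : J y - J x = ∫ t in (0:ℝ)..1, ⟪g (x + t • (y - x)), y - x⟫ := by
    have := intervalIntegral.integral_eq_sub_of_hasDerivAt
      (f := fun t : ℝ => J (x + t • (y - x)))
      (f' := fun t : ℝ => ⟪g (x + t • (y - x)), y - x⟫)
      (fun t _ => hderiv t) (hcont.intervalIntegrable 0 1)
    rw [this]; simp
  have hbound : ∀ t ∈ Set.Icc (0:ℝ) 1,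
      ⟪g (x + t • (y - x)), y - x⟫ ≤ ⟪g x, y - x⟫ + L * t * ‖y - x‖ ^ 2 := by
    intro t ht
    have h1 : ⟪g (x + t • (y - x)) - g x, y - x⟫ ≤ ‖g (x + t • (y - x)) - g x‖ * ‖y - x‖ :=
      real_inner_le_norm _ _
    have h2 : ‖g (x + t • (y - x)) - g x‖ ≤ L * (t * ‖y - x‖) := by
      have := hlip (x + t • (y - x)) x
      simpa [norm_smul, abs_of_nonneg ht.1] using this
    have h3 : ‖g (x + t • (y - x)) - g x‖ * ‖y - x‖ ≤ L * (t * ‖y - x‖) * ‖y - x‖ :=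
      mul_le_mul_of_nonneg_right h2 (norm_nonneg _)
    have h4 : ⟪g (x + t • (y - x)), y - x⟫ = ⟪g x, y - x⟫ + ⟪g (x + t • (y - x)) - g x, y - x⟫ := by
      rw [inner_sub_left]; ring
    rw [h4]; nlinarith [h1, h3]
  have hint : (∫ t in (0:ℝ)..1, ⟪g (x + t • (y - x)), y - x⟫)
      ≤ ∫ t in (0:ℝ)..1, (⟪g x, y - x⟫ + L * t * ‖y - x‖ ^ 2) := by
    apply intervalIntegral.integral_mono_on (by norm_num)
      (hcont.intervalIntegrable 0 1)
      ((by continuity : Continuous fun t : ℝ => ⟪g x, y - x⟫ + L * t * ‖y - x‖ ^ 2).intervalIntegrable 0 1)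
    exact hbound
  have hval : (∫ t in (0:ℝ)..1, (⟪g x, y - x⟫ + L * t * ‖y - x‖ ^ 2))
      = ⟪g x, y - x⟫ + L / 2 * ‖y - x‖ ^ 2 := by
    rw [intervalIntegral.integral_add intervalIntegrable_const (by apply Continuous.intervalIntegrable; continuity)]
    simp only [intervalIntegral.integral_const]
    have : (∫ t in (0:ℝ)..1, L * t * ‖y - x‖ ^ 2)
        = (L * ‖y - x‖ ^ 2) * ∫ t in (0:ℝ)..1, t := by
      rw [← intervalIntegral.integral_const_mul]
      congr 1; ext t; ring
    rw [this, integral_id]; norm_num; ring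
  linarith [hFTC ▸ hint.trans_eq hval]

/-- Theorem 1(i): for a bounded sequence generated by the S2E Newton-type iteration
`θ^{m+1} = θ^m − (Δ^m)⁻¹(∇J(θ^m) − e^m)`, there exists a limit point `θ̄` (limit of a
convergent subsequence) with `‖∇J(θ̄)‖ ≤ c₁ ε̄`, where `c₁ = (2 + Lη)/(2 − Lη)`. -/
theorem exists_limit_point_grad_norm_le
    {E : Type*} [NormedAddCommGroup E] [InnerProductSpace ℝ E] [FiniteDimensional ℝ E]
    (J : E → ℝ) (L : ℝ) (hL : 0 < L)
    (hJd : Differentiable ℝ J)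
    (hlip : ∀ x y : E, ‖gradient J x - gradient J y‖ ≤ L * ‖x - y‖)
    (hbdd : BddBelow (Set.range J))
    (η : ℝ) (hη : 0 < η) (hLη : 0 < 2 - L * η)
    (θ : ℕ → E) (hθbdd : Bornology.IsBounded (Set.range θ))
    (Δ : ℕ → E ≃ₗ[ℝ] E) (e : ℕ → E) (ε : ℝ) (hε : 0 ≤ ε)
    (hsym : ∀ m, ∀ u v : E, ⟪Δ m u, v⟫ = ⟪u, Δ m v⟫)
    (hlower : ∀ m, ∀ v : E, (1 / η) * ‖v‖ ^ 2 ≤ ⟪Δ m v, v⟫)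
    (hupper : ∀ m, ∀ v : E, ‖Δ m v‖ ≤ L * ‖v‖)
    (herr : ∀ m, ‖e m‖ ≤ ε)
    (hupd : ∀ m, θ (m + 1) = θ m - (Δ m).symm (gradient J (θ m) - e m)) :
    ∃ θbar : E,
      (∃ φ : ℕ → ℕ, StrictMono φ ∧ Tendsto (θ ∘ φ) atTop (nhds θbar)) ∧
        ‖gradient J θbar‖ ≤ ((2 + L * η) / (2 - L * η)) * ε := by
  set g := gradient J with hg
  set d : ℕ → E := fun m => θ (m + 1) - θ m with hd
  set α : ℝ := 1 / η - L / 2 with hα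
  have hαpos : 0 < α := by
    rw [hα]
    have : (2 - L * η) / (2 * η) = 1 / η - L / 2 := by field_simp
    rw [← this]
    positivity
  -- Δ m (d m) = e m - g (θ m)
  have hΔd : ∀ m, Δ m (d m) = e m - g (θ m) := by
    intro m
    have : d m = -(Δ m).symm (g (θ m) - e m) := by
      rw [hd]; simp [hupd m]
    rw [this, map_neg, LinearEquiv.apply_symm_apply]
    abel
  -- gradient bound at each iterate
  have hgb : ∀ m, ‖g (θ m)‖ ≤ ε + L * ‖d m‖ := by
    intro m
    have : g (θ m) = e m - Δ m (d m) := by rw [hΔd m]; abel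
    calc ‖g (θ m)‖ = ‖e m - Δ m (d m)‖ := by rw [this]
      _ ≤ ‖e m‖ + ‖Δ m (d m)‖ := norm_sub_le _ _
      _ ≤ ε + L * ‖d m‖ := add_le_add (herr m) (hupper m (d m))
  -- per-step decrease
  have hstep : ∀ m, α * ‖d m‖ ^ 2 - ε * ‖d m‖ ≤ J (θ m) - J (θ (m + 1)) := by
    intro m
    have hdesc := descent_lemma J L hL.le hJd hlip (θ m) (θ (m + 1))
    have hsub : θ (m + 1) - θ m = d m := rfl
    rw [hsub, ← hg] at hdesc
    have hip : ⟪g (θ m), d m⟫ ≤ ε * ‖d m‖ - (1 / η) * ‖d m‖ ^ 2 := by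
      have h1 : ⟪g (θ m), d m⟫ = ⟪e m, d m⟫ - ⟪Δ m (d m), d m⟫ := by
        rw [← inner_sub_left]
        congr 1
        rw [hΔd m]; abel
      have h2 : ⟪e m, d m⟫ ≤ ε * ‖d m‖ :=
        (real_inner_le_norm _ _).trans (mul_le_mul_of_nonneg_right (herr m) (norm_nonneg _))
      have h3 := hlower m (d m)
      linarith [h1 ▸ sub_le_sub h2 (le_refl (⟪Δ m (d m), d m⟫)), h1]
    rw [hα]; linarith [hdesc, hip]
  -- frequently small step norms
  have hfreq : ∀ k : ℕ, ∃ᶠ m in atTop, ‖d m‖ < ε / α + 1 / (k + 1 : ℝ) := by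
    intro k
    by_contra hcon
    rw [Filter.not_frequently] at hcon
    simp only [not_lt] at hcon
    obtain ⟨N, hN⟩ := eventually_atTop.1 hcon
    set δ : ℝ := 1 / (k + 1 : ℝ) with hδ
    have hδpos : 0 < δ := by positivity
    set c : ℝ := δ * (ε + α * δ) with hc
    have hcpos : 0 < c := by positivity
    have hdec : ∀ m, N ≤ m → J (θ (m + 1)) ≤ J (θ m) - c := by
      intro m hm
      have ht := hN m hm
      have h1 := hstep m
      have hdnn : (0:ℝ) ≤ ‖d m‖ := norm_nonneg _
      have hεα : α * (ε / α) = ε := mul_div_cancel₀ ε (ne_of_gt hαpos)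
      have hdist : α * (ε / α + δ) = ε + α * δ := by
        rw [mul_add, hεα]
      have h5 : ε + α * δ ≤ α * ‖d m‖ := by
        rw [← hdist]; exact mul_le_mul_of_nonneg_left ht hαpos.le
      have h8 : α * δ ≤ α * ‖d m‖ - ε := by linarith
      have h6 : (ε / α + δ) * (α * δ) ≤ ‖d m‖ * (α * ‖d m‖ - ε) :=
        mul_le_mul ht h8 (by positivity) (norm_nonneg _)
      have h7 : c ≤ α * ‖d m‖ ^ 2 - ε * ‖d m‖ := by nlinarith [h6, hεα]
      linarith
    have hiter : ∀ j : ℕ, J (θ (N + j)) ≤ J (θ N) - j * c := by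
      intro j
      induction j with
      | zero => simp
      | succ n ih =>
        have := hdec (N + n) (Nat.le_add_right N n)
        have he : N + (n + 1) = (N + n) + 1 := by ring
        rw [he]
        push_cast
        push_cast at ih
        linarith
    obtain ⟨B, hB⟩ := hbdd
    have hBle : ∀ n, B ≤ J (θ n) := fun n => hB ⟨θ n, rfl⟩
    obtain ⟨j, hj⟩ := exists_nat_gt ((J (θ N) - B) / c)
    have := hiter j
    have hjc : J (θ N) - B < j * c := by
      rw [div_lt_iff₀ hcpos] at hj
      linarith
    linarith [hBle (N + j)]
  -- extract subsequence with controlled step norms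
  obtain ⟨φ, hφmono, hφ⟩ := Filter.extraction_forall_of_frequently hfreq
  -- Bolzano–Weierstrass
  obtain ⟨θbar, -, ψ, hψmono, hψ⟩ :=
    tendsto_subseq_of_bounded hθbdd (fun n => Set.mem_range_self (φ n) : ∀ n, (θ ∘ φ) n ∈ Set.range θ)
  refine ⟨θbar, ⟨φ ∘ ψ, hφmono.comp hψmono, hψ⟩, ?_⟩
  -- limits
  have hgc : Continuous g := by
    have : LipschitzWith (Real.toNNReal L) g := by
      apply LipschitzWith.of_dist_le_mul
      intro a b
      simp only [dist_eq_norm, Real.coe_toNNReal _ hL.le]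
      exact hlip a b
    exact this.continuous
  have h1 : Tendsto (fun n => ‖g ((θ ∘ φ ∘ ψ) n)‖) atTop (nhds ‖g θbar‖) :=
    (continuous_norm.comp hgc).continuousAt.tendsto.comp hψ
  have h3 : Tendsto (fun n => ε + L * (ε / α + 1 / ((ψ n : ℝ) + 1))) atTop
      (nhds (ε + L * (ε / α + 0))) := by
    apply tendsto_const_nhds.add
    apply Tendsto.const_mul
    apply tendsto_const_nhds.add
    exact tendsto_one_div_add_atTop_nhds_zero_nat.comp hψmono.tendsto_atTop
  have h2 : ∀ n, ‖g ((θ ∘ φ ∘ ψ) n)‖ ≤ ε + L * (ε / α + 1 / ((ψ n : ℝ) + 1)) := by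
    intro n
    have := hgb (φ (ψ n))
    have hst := (hφ (ψ n)).le
    calc ‖g ((θ ∘ φ ∘ ψ) n)‖ ≤ ε + L * ‖d (φ (ψ n))‖ := this
      _ ≤ ε + L * (ε / α + 1 / ((ψ n : ℝ) + 1)) := by
          gcongr
  have hfin : ‖g θbar‖ ≤ ε + L * (ε / α + 0) := le_of_tendsto_of_tendsto' h1 h3 h2
  have heq : ε + L * (ε / α + 0) = ((2 + L * η) / (2 - L * η)) * ε := by
    have hη' : η ≠ 0 := ne_of_gt hη
    have h2Lη : (2 - L * η) ≠ 0 := ne_of_gt hLη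
    have hαval : α = (2 - L * η) / (2 * η) := by rw [hα]; field_simp
    rw [hαval, div_div_eq_mul_div]
    field_simp
    ring
  linarith [heq ▸ hfin]
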